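/- Let 𝒜 be the unital C*-algebra of sequences A = (A_k)_{k≥1} of 2×2 complex matrices converging in norm to a scalar multiple of the identity, with supremum norm ‖A‖ = sup_k ‖A_k‖, and let L(A) = inf_{λ∈ℂ} sup_k k‖A_k − λI‖ ∈ [0,∞]. Then the set {A ∈ 𝒜 : L(A) ≤ 1 and ‖A‖ ≤ 1} is totally bounded in the supremum norm. -/

import Mathlib

open scoped ENNReal NNReal Matrix Matrix.Norms.L2Operator
open Filter

/-- Membership in the C*-algebra `𝒜` of sequences of `2×2` complex matrices (indexed by
`k ≥ 1`, here realised as `k+1` for `k : ℕ`) converging in (operator) norm to a scalar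
multiple of the identity. -/
def ConvToScalar (A : ℕ → Matrix (Fin 2) (Fin 2) ℂ) : Prop :=
  ∃ α : ℂ, Tendsto A atTop (nhds (α • (1 : Matrix (Fin 2) (Fin 2) ℂ)))

/-- The weighted norm `|||A||| = sup_k k ‖A_k‖ ∈ [0,∞]` (the index `k : ℕ` stands for the
`(k+1)`-st term of the sequence). -/
noncomputable def tripleNorm (A : ℕ → Matrix (Fin 2) (Fin 2) ℂ) : ℝ≥0∞ :=
  ⨆ k : ℕ, ((k : ℝ≥0∞) + 1) * (‖A k‖₊ : ℝ≥0∞)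

/-- The Lip-seminorm `L(A) = inf_{λ ∈ ℂ} |||A − λ·1|||`. -/
noncomputable def Lsem (A : ℕ → Matrix (Fin 2) (Fin 2) ℂ) : ℝ≥0∞ :=
  ⨅ l : ℂ, tripleNorm (fun k => A k - l • (1 : Matrix (Fin 2) (Fin 2) ℂ))

/-- If `L(A) ≤ 1` then some scalar `l` satisfies `‖A_k − l·1‖ ≤ 2/(k+1)` for all `k`. -/
lemma exists_scalar_close (A : ℕ → Matrix (Fin 2) (Fin 2) ℂ) (h : Lsem A ≤ 1) :
    ∃ l : ℂ, ∀ k : ℕ, ‖A k - l • (1 : Matrix (Fin 2) (Fin 2) ℂ)‖ ≤ 2 / (k + 1) := by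
  have h2 : Lsem A < 2 := lt_of_le_of_lt h (by norm_num)
  obtain ⟨l, hl⟩ := iInf_lt_iff.mp h2
  refine ⟨l, fun k => ?_⟩
  have h3 : ((k : ℝ≥0∞) + 1) * (‖A k - l • (1 : Matrix (Fin 2) (Fin 2) ℂ)‖₊ : ℝ≥0∞) ≤ 2 := by
    have := le_iSup (fun j : ℕ => ((j : ℝ≥0∞) + 1) *
      (‖A j - l • (1 : Matrix (Fin 2) (Fin 2) ℂ)‖₊ : ℝ≥0∞)) k
    exact le_of_lt (lt_of_le_of_lt this (by simpa [tripleNorm] using hl))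
  have h4 : ((k : ℝ) + 1) * ‖A k - l • (1 : Matrix (Fin 2) (Fin 2) ℂ)‖ ≤ 2 := by
    have := (ENNReal.toReal_le_toReal (by finiteness) (by norm_num)).mpr h3
    simpa [ENNReal.toReal_mul, ENNReal.toReal_add] using this
  have hk : (0:ℝ) < (k:ℝ) + 1 := by positivity
  rw [le_div_iff₀ hk]
  linarith [h4]

/-- In the C*-algebra `𝒜` of sequences of `2×2` complex matrices
converging in norm to a scalar multiple of the identity, the set
`{A ∈ 𝒜 : L(A) ≤ 1, ‖A‖ ≤ 1}` is totally bounded in the supremum norm: for every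
`ε > 0` there is a finite `ε`-net. -/
theorem stmt14 :
    ∀ ε : ℝ, 0 < ε → ∃ s : Finset (ℕ → Matrix (Fin 2) (Fin 2) ℂ),
      ∀ A : ℕ → Matrix (Fin 2) (Fin 2) ℂ,
        ConvToScalar A → Lsem A ≤ 1 → (∀ k, ‖A k‖ ≤ 1) →
          ∃ B ∈ s, ∀ k, ‖A k - B k‖ ≤ ε := by
  classical
  intro ε hε
  have hprop : ProperSpace (Matrix (Fin 2) (Fin 2) ℂ) := FiniteDimensional.proper ℂ _
  obtain ⟨T, hTfin, hTcov⟩ := Metric.totallyBounded_iff.mp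
    (isCompact_closedBall (0 : Matrix (Fin 2) (Fin 2) ℂ) 1).totallyBounded (ε/2) (by positivity)
  obtain ⟨S, hSfin, hScov⟩ := Metric.totallyBounded_iff.mp
    (isCompact_closedBall (0 : ℂ) 4).totallyBounded (ε/2) (by positivity)
  obtain ⟨N, hN⟩ := exists_nat_ge (4/ε)
  refine ⟨Finset.image (fun p : (Fin N → Matrix (Fin 2) (Fin 2) ℂ) × ℂ =>
      fun k => if h : k < N then p.1 ⟨k, h⟩ else p.2 • (1 : Matrix (Fin 2) (Fin 2) ℂ))
      ((Fintype.piFinset fun _ => hTfin.toFinset) ×ˢ hSfin.toFinset), ?_⟩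
  intro A _ hL hnorm
  obtain ⟨l, hl⟩ := exists_scalar_close A hL
  -- bound on `l`
  have hone : ‖(1 : Matrix (Fin 2) (Fin 2) ℂ)‖ = 1 := norm_one
  have hlnorm : ‖l‖ ≤ 4 := by
    have h0 := hl 0
    have h1 : ‖l • (1 : Matrix (Fin 2) (Fin 2) ℂ)‖ ≤
        ‖A 0‖ + ‖A 0 - l • (1 : Matrix (Fin 2) (Fin 2) ℂ)‖ := by
      calc ‖l • (1 : Matrix (Fin 2) (Fin 2) ℂ)‖
          = ‖A 0 - (A 0 - l • (1 : Matrix (Fin 2) (Fin 2) ℂ))‖ := by rw [sub_sub_cancel]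
        _ ≤ ‖A 0‖ + ‖A 0 - l • (1 : Matrix (Fin 2) (Fin 2) ℂ)‖ := norm_sub_le _ _
    have h2 : ‖l • (1 : Matrix (Fin 2) (Fin 2) ℂ)‖ = ‖l‖ := by
      rw [norm_smul, hone, mul_one]
    have := hnorm 0
    rw [h2] at h1
    norm_num at h0
    linarith
  -- choose `l'` from the net of the disc
  obtain ⟨l', hl'S, hl'ball⟩ : ∃ y ∈ S, l ∈ Metric.ball y (ε/2) := by
    have := hScov (by simpa [Metric.mem_closedBall, dist_zero_right] using hlnorm)
    simpa using this
  -- choose net elements for the first `N` matrices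
  have hch : ∀ j : Fin N, ∃ y ∈ T, A j ∈ Metric.ball y (ε/2) := by
    intro j
    have := hTcov (by simpa [Metric.mem_closedBall, dist_zero_right] using hnorm j)
    simpa using this
  choose f hfT hf using hch
  refine ⟨fun k => if h : k < N then f ⟨k, h⟩ else l' • (1 : Matrix (Fin 2) (Fin 2) ℂ),
    Finset.mem_image.mpr ⟨(f, l'), Finset.mem_product.mpr
      ⟨Fintype.mem_piFinset.mpr fun j => hTfin.mem_toFinset.mpr (hfT j),
        hSfin.mem_toFinset.mpr hl'S⟩, rfl⟩, fun k => ?_⟩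
  beta_reduce
  by_cases hk : k < N
  · rw [dif_pos hk]
    have := hf ⟨k, hk⟩
    rw [Metric.mem_ball, dist_eq_norm] at this
    exact le_trans this.le (by linarith)
  · rw [dif_neg hk]
    push_neg at hk
    have h1 : ‖A k - l' • (1 : Matrix (Fin 2) (Fin 2) ℂ)‖ ≤
        ‖A k - l • (1 : Matrix (Fin 2) (Fin 2) ℂ)‖ +
        ‖(l - l') • (1 : Matrix (Fin 2) (Fin 2) ℂ)‖ := by
      have heq : A k - l' • (1 : Matrix (Fin 2) (Fin 2) ℂ) =
          (A k - l • (1 : Matrix (Fin 2) (Fin 2) ℂ)) +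
          (l - l') • (1 : Matrix (Fin 2) (Fin 2) ℂ) := by
        rw [sub_smul]; abel
      rw [heq]; exact norm_add_le _ _
    have h2 : ‖(l - l') • (1 : Matrix (Fin 2) (Fin 2) ℂ)‖ < ε/2 := by
      rw [norm_smul, hone, mul_one, ← dist_eq_norm]
      exact Metric.mem_ball.mp hl'ball
    have h3 := hl k
    have hkpos : (0:ℝ) < (k:ℝ) + 1 := by positivity
    have hkN : (N:ℝ) ≤ (k:ℝ) := by exact_mod_cast hk
    have h4 : 2 / ((k:ℝ) + 1) ≤ ε/2 := by
      rw [div_le_div_iff₀ hkpos (by norm_num)]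
      have : 4 ≤ ε * ((k:ℝ) + 1) := by
        have h5 : 4/ε ≤ (k:ℝ) + 1 := by linarith
        calc (4:ℝ) = ε * (4/ε) := by field_simp
          _ ≤ ε * ((k:ℝ) + 1) := by exact mul_le_mul_of_nonneg_left h5 hε.le
      linarith
    linarith
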